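/- Let n ≥ 4 and let p_1,...,p_n ∈ ℝ² be reconstructible from distances. Suppose the multiset { I(p_{i_1},p_{i_2},p_{i_3},p_{i_4}) : i_1 < i_2 < i_3 < i_4 } is not equal to the multiset of its negatives. Let q_1,...,q_n ∈ ℝ². Then the configurations p and q have both the same distribution of distances and the same distribution of I-values if and only if there is a rotation R ∈ SO(2), a translation T ∈ ℝ², and a permutation π of {1,...,n} with R p_i + T = q_{π(i)} for all i. -/

import Mathlib

/-- The signed area of the parallelogram spanned by `x - z` and `y - z` in `ℝ²`. -/
def sarea (x y z : Fin 2 → ℝ) : ℝ :=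
  (x 0 - z 0) * (y 1 - z 1) - (x 1 - z 1) * (y 0 - z 0)

/-- The `SE(2) × S₄`-invariant `I` built from signed areas. -/
def Ifun (q₁ q₂ q₃ q₄ : Fin 2 → ℝ) : ℝ :=
  (sarea q₁ q₂ q₄ ^ 2 - sarea q₁ q₃ q₄ ^ 2) *
  (sarea q₁ q₂ q₃ ^ 2 - sarea q₁ q₃ q₄ ^ 2) *
  (sarea q₁ q₂ q₃ ^ 2 - sarea q₁ q₂ q₄ ^ 2) *
  (sarea q₁ q₂ q₃ - sarea q₁ q₂ q₄ + 2 * sarea q₁ q₃ q₄) *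
  (sarea q₁ q₂ q₃ - 2 * sarea q₁ q₂ q₄ + sarea q₁ q₃ q₄) *
  (2 * sarea q₁ q₂ q₃ - sarea q₁ q₂ q₄ + sarea q₁ q₃ q₄)

/-- The distribution of squared pairwise distances of an `n`-point configuration. -/
noncomputable def sqDistDistribution {n : ℕ} (p : Fin n → EuclideanSpace ℝ (Fin 2)) :
    Multiset ℝ :=
  (((Finset.univ : Finset (Sym2 (Fin n))).filter fun z => ¬ z.IsDiag).val).map
    (Sym2.lift ⟨fun i j => dist (p i) (p j) ^ 2, fun _ _ => by simp [dist_comm]⟩)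

/-- The distribution of the values of `I` over all quadruples `i₁ < i₂ < i₃ < i₄`. -/
noncomputable def IDistribution {n : ℕ} (p : Fin n → EuclideanSpace ℝ (Fin 2)) :
    Multiset ℝ :=
  (((Finset.univ : Finset (Fin n × Fin n × Fin n × Fin n)).filter
      fun t => t.1 < t.2.1 ∧ t.2.1 < t.2.2.1 ∧ t.2.2.1 < t.2.2.2).val).map
    fun t => Ifun (p t.1) (p t.2.1) (p t.2.2.1) (p t.2.2.2)

/-- An `n`-point configuration in `ℝ²` is reconstructible from distances if any
configuration with the same distribution of distances agrees with it up to a rigid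
motion and a relabeling of the points. -/
def ReconstructibleFromDistances {n : ℕ} (p : Fin n → EuclideanSpace ℝ (Fin 2)) : Prop :=
  ∀ q : Fin n → EuclideanSpace ℝ (Fin 2), sqDistDistribution q = sqDistDistribution p →
    ∃ M : Matrix (Fin 2) (Fin 2) ℝ, M ∈ Matrix.orthogonalGroup (Fin 2) ℝ ∧
      ∃ T : EuclideanSpace ℝ (Fin 2), ∃ π : Equiv.Perm (Fin n),
        ∀ i, (WithLp.equiv 2 (Fin 2 → ℝ)).symm (M.mulVec (p i)) + T = q (π i)

/-! ### Auxiliary algebraic lemmas -/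

def Ffun (a b c : ℝ) : ℝ :=
  (b ^ 2 - c ^ 2) * (a ^ 2 - c ^ 2) * (a ^ 2 - b ^ 2) *
  (a - b + 2 * c) * (a - 2 * b + c) * (2 * a - b + c)

lemma Ifun_eq (x₁ x₂ x₃ x₄ : Fin 2 → ℝ) :
    Ifun x₁ x₂ x₃ x₄ = Ffun (sarea x₁ x₂ x₃) (sarea x₁ x₂ x₄) (sarea x₁ x₃ x₄) := rfl

lemma sarea_swap12 (x y z : Fin 2 → ℝ) : sarea y x z = - sarea x y z := by
  simp only [sarea]; ring

lemma sarea_swap23 (x y z : Fin 2 → ℝ) : sarea x z y = - sarea x y z := by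
  simp only [sarea]; ring

lemma sarea_cocycle (x₁ x₂ x₃ x₄ : Fin 2 → ℝ) :
    sarea x₂ x₃ x₄ = sarea x₁ x₂ x₃ - sarea x₁ x₂ x₄ + sarea x₁ x₃ x₄ := by
  simp only [sarea]; ring

set_option maxHeartbeats 1000000 in
lemma Ifun_swap34 (x₁ x₂ x₃ x₄ : Fin 2 → ℝ) :
    Ifun x₁ x₂ x₄ x₃ = Ifun x₁ x₂ x₃ x₄ := by
  rw [Ifun_eq, Ifun_eq, sarea_swap23 x₁ x₄ x₃]
  simp only [Ffun]; ring

set_option maxHeartbeats 1000000 in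
lemma Ifun_swap23 (x₁ x₂ x₃ x₄ : Fin 2 → ℝ) :
    Ifun x₁ x₃ x₂ x₄ = Ifun x₁ x₂ x₃ x₄ := by
  rw [Ifun_eq, Ifun_eq, sarea_swap23 x₁ x₂ x₃]
  simp only [Ffun]; ring

set_option maxHeartbeats 1000000 in
lemma Ifun_swap12 (x₁ x₂ x₃ x₄ : Fin 2 → ℝ) :
    Ifun x₂ x₁ x₃ x₄ = Ifun x₁ x₂ x₃ x₄ := by
  rw [Ifun_eq, Ifun_eq, sarea_swap12 x₁ x₂ x₃, sarea_swap12 x₁ x₂ x₄,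
    sarea_cocycle x₁ x₂ x₃ x₄]
  simp only [Ffun]; ring

lemma Ifun_swap13 (x₁ x₂ x₃ x₄ : Fin 2 → ℝ) : Ifun x₃ x₂ x₁ x₄ = Ifun x₁ x₂ x₃ x₄ :=
  (Ifun_swap12 x₂ x₃ x₁ x₄).trans ((Ifun_swap23 x₂ x₁ x₃ x₄).trans (Ifun_swap12 x₁ x₂ x₃ x₄))

lemma Ifun_swap24 (x₁ x₂ x₃ x₄ : Fin 2 → ℝ) : Ifun x₁ x₄ x₃ x₂ = Ifun x₁ x₂ x₃ x₄ :=
  (Ifun_swap34 x₁ x₄ x₂ x₃).trans ((Ifun_swap23 x₁ x₂ x₄ x₃).trans (Ifun_swap34 x₁ x₂ x₃ x₄))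

lemma Ifun_swap14 (x₁ x₂ x₃ x₄ : Fin 2 → ℝ) : Ifun x₄ x₂ x₃ x₁ = Ifun x₁ x₂ x₃ x₄ :=
  (Ifun_swap34 x₄ x₂ x₁ x₃).trans ((Ifun_swap13 x₁ x₂ x₄ x₃).trans (Ifun_swap34 x₁ x₂ x₃ x₄))

lemma Ifun_comp_swap (x : Fin 4 → (Fin 2 → ℝ)) (a b : Fin 4) :
    Ifun (x (Equiv.swap a b 0)) (x (Equiv.swap a b 1)) (x (Equiv.swap a b 2))
      (x (Equiv.swap a b 3)) = Ifun (x 0) (x 1) (x 2) (x 3) := by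
  fin_cases a <;> fin_cases b <;>
    simp only [Equiv.swap_apply_def] <;> norm_num <;>
    first
      | rfl
      | exact Ifun_swap12 _ _ _ _
      | exact Ifun_swap23 _ _ _ _
      | exact Ifun_swap34 _ _ _ _
      | exact Ifun_swap13 _ _ _ _
      | exact Ifun_swap24 _ _ _ _
      | exact Ifun_swap14 _ _ _ _

lemma Ifun_perm (σ : Equiv.Perm (Fin 4)) (x : Fin 4 → (Fin 2 → ℝ)) :
    Ifun (x (σ 0)) (x (σ 1)) (x (σ 2)) (x (σ 3)) = Ifun (x 0) (x 1) (x 2) (x 3) := by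
  refine Equiv.Perm.swap_induction_on σ (fun x => rfl)
    (fun f a b hab ih x => ?_) x
  · have h : ∀ i : Fin 4, x ((Equiv.swap a b * f) i) = (x ∘ Equiv.swap a b) (f i) := fun i => rfl
    simp only [h]
    rw [ih (x ∘ Equiv.swap a b)]
    exact Ifun_comp_swap x a b

/-! ### Rigid motions -/

noncomputable def rig (M : Matrix (Fin 2) (Fin 2) ℝ) (T : EuclideanSpace ℝ (Fin 2))
    (x : EuclideanSpace ℝ (Fin 2)) : EuclideanSpace ℝ (Fin 2) :=
  (WithLp.equiv 2 (Fin 2 → ℝ)).symm (M.mulVec x) + T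

lemma rig_apply (M : Matrix (Fin 2) (Fin 2) ℝ) (T x : EuclideanSpace ℝ (Fin 2)) (i : Fin 2) :
    rig M T x i = M i 0 * x 0 + M i 1 * x 1 + T i := by
  simp [rig, Matrix.mulVec, dotProduct, Fin.sum_univ_two,
    PiLp.add_apply]
  fin_cases i <;> simp

lemma sarea_rig (M : Matrix (Fin 2) (Fin 2) ℝ) (T x y z : EuclideanSpace ℝ (Fin 2)) :
    sarea (rig M T x) (rig M T y) (rig M T z) = M.det * sarea x y z := by
  simp only [sarea, rig_apply, Matrix.det_fin_two]
  ring

lemma Ffun_mul (d a b c : ℝ) : Ffun (d * a) (d * b) (d * c) = d ^ 9 * Ffun a b c := by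
  simp only [Ffun]; ring

lemma Ifun_rig (M : Matrix (Fin 2) (Fin 2) ℝ) (T x₁ x₂ x₃ x₄ : EuclideanSpace ℝ (Fin 2)) :
    Ifun (rig M T x₁) (rig M T x₂) (rig M T x₃) (rig M T x₄) =
      M.det ^ 9 * Ifun x₁ x₂ x₃ x₄ := by
  rw [Ifun_eq, Ifun_eq, sarea_rig, sarea_rig, sarea_rig, Ffun_mul]

lemma det_sq_of_orth {M : Matrix (Fin 2) (Fin 2) ℝ} (hM : M ∈ Matrix.orthogonalGroup (Fin 2) ℝ) :
    M.det ^ 2 = 1 := by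
  have h := (Matrix.mem_orthogonalGroup_iff (Fin 2) ℝ).mp hM
  have := congrArg Matrix.det h
  rw [Matrix.det_mul, Matrix.det_one] at this
  simpa [Matrix.star_eq_conjTranspose, Matrix.det_conjTranspose, sq] using this

lemma dist_rig {M : Matrix (Fin 2) (Fin 2) ℝ} (hM : M ∈ Matrix.orthogonalGroup (Fin 2) ℝ)
    (T : EuclideanSpace ℝ (Fin 2)) (x y : EuclideanSpace ℝ (Fin 2)) :
    dist (rig M T x) (rig M T y) = dist x y := by
  have h := (Matrix.mem_orthogonalGroup_iff' (Fin 2) ℝ).mp hM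
  have h00 := congrFun (congrFun h 0) 0
  have h01 := congrFun (congrFun h 0) 1
  have h11 := congrFun (congrFun h 1) 1
  simp only [Matrix.mul_apply, Fin.sum_univ_two, Matrix.star_eq_conjTranspose,
    Matrix.conjTranspose_apply, Matrix.one_apply, star_trivial, if_true, if_false,
    Fin.zero_eq_one_iff, Fin.one_eq_zero_iff, Matrix.transpose_apply] at h00 h01 h11
  rw [EuclideanSpace.dist_eq, EuclideanSpace.dist_eq]
  congr 1
  simp only [Fin.sum_univ_two, rig_apply, Real.dist_eq]
  rw [sq_abs, sq_abs, sq_abs, sq_abs]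
  norm_num at h01
  linear_combination (x 0 - y 0) ^ 2 * h00 + (x 1 - y 1) ^ 2 * h11 +
    2 * (x 0 - y 0) * (x 1 - y 1) * h01

/-! ### Relabeling invariance of the distributions -/

lemma sqDist_rig {n : ℕ} {M : Matrix (Fin 2) (Fin 2) ℝ}
    (hM : M ∈ Matrix.orthogonalGroup (Fin 2) ℝ) (T : EuclideanSpace ℝ (Fin 2))
    (p q : Fin n → EuclideanSpace ℝ (Fin 2)) (ρ : Equiv.Perm (Fin n))
    (hpq : ∀ j, q j = rig M T (p (ρ j))) :
    sqDistDistribution q = sqDistDistribution p := by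
  classical
  set s := ((Finset.univ : Finset (Sym2 (Fin n))).filter fun z => ¬ z.IsDiag) with hs
  have hmapval : s.val.map (Sym2.map ρ) = s.val := by
    apply Multiset.eq_of_le_of_card_le
    · rw [Multiset.le_iff_subset (s.nodup.map (Sym2.map.injective ρ.injective))]
      intro z hz
      obtain ⟨w, hw, rfl⟩ := Multiset.mem_map.mp hz
      have hw' : ¬ w.IsDiag := by
        simpa [hs, Finset.mem_filter] using hw
      have : ¬ (Sym2.map ρ w).IsDiag := by
        rw [Sym2.isDiag_map ρ.injective]; exact hw'
      simpa [hs, Finset.mem_filter] using this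
    · simp
  unfold sqDistDistribution
  rw [show ((Finset.univ : Finset (Sym2 (Fin n))).filter fun z => ¬ z.IsDiag) = s from rfl]
  have hcongr : ∀ z ∈ s.val,
      (Sym2.lift ⟨fun i j => dist (q i) (q j) ^ 2, fun _ _ => by simp [dist_comm]⟩) z =
      (Sym2.lift ⟨fun i j => dist (p i) (p j) ^ 2, fun _ _ => by simp [dist_comm]⟩)
        (Sym2.map ρ z) := by
    intro z _
    induction z using Sym2.ind with
    | _ i j =>
        simp only [Sym2.map_pair_eq, Sym2.lift_mk]
        rw [hpq i, hpq j, dist_rig hM]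
  rw [Multiset.map_congr rfl hcongr]
  rw [show (fun z => (Sym2.lift ⟨fun i j => dist (p i) (p j) ^ 2, fun _ _ => by
        simp [dist_comm]⟩) (Sym2.map ρ z)) =
      ((Sym2.lift ⟨fun i j => dist (p i) (p j) ^ 2, fun _ _ => by simp [dist_comm]⟩) ∘
        (Sym2.map ρ)) from rfl]
  rw [← Multiset.map_map, hmapval]

def quadOK {n : ℕ} (t : Fin n × Fin n × Fin n × Fin n) : Prop :=
  t.1 < t.2.1 ∧ t.2.1 < t.2.2.1 ∧ t.2.2.1 < t.2.2.2

def quadVec {n : ℕ} (t : Fin n × Fin n × Fin n × Fin n) : Fin 4 → Fin n :=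
  fun k => if k = 0 then t.1 else if k = 1 then t.2.1 else if k = 2 then t.2.2.1 else t.2.2.2

def quadSet {n : ℕ} (t : Fin n × Fin n × Fin n × Fin n) : Finset (Fin n) :=
  {t.1, t.2.1, t.2.2.1, t.2.2.2}

lemma quadVec0 {n : ℕ} (t : Fin n × Fin n × Fin n × Fin n) : quadVec t 0 = t.1 := by
  simp [quadVec]

lemma quadVec1 {n : ℕ} (t : Fin n × Fin n × Fin n × Fin n) : quadVec t 1 = t.2.1 := by
  simp [quadVec]

lemma quadVec2 {n : ℕ} (t : Fin n × Fin n × Fin n × Fin n) : quadVec t 2 = t.2.2.1 := by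
  simp [quadVec]

lemma quadVec3 {n : ℕ} (t : Fin n × Fin n × Fin n × Fin n) : quadVec t 3 = t.2.2.2 := by
  simp [quadVec]

lemma quadVec_mem {n : ℕ} (t : Fin n × Fin n × Fin n × Fin n) (k : Fin 4) :
    quadVec t k ∈ quadSet t := by
  fin_cases k <;> simp [quadVec, quadSet]

lemma quadVec_strictMono {n : ℕ} {t : Fin n × Fin n × Fin n × Fin n} (ht : quadOK t) :
    StrictMono (quadVec t) := by
  obtain ⟨h1, h2, h3⟩ := ht
  intro i j hij
  fin_cases i <;> fin_cases j <;>
    first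
      | exact absurd hij (by decide)
      | (simp only [quadVec]
         norm_num
         first
           | exact h1
           | exact h2
           | exact h3
           | exact h1.trans h2
           | exact h2.trans h3
           | exact (h1.trans h2).trans h3)

lemma quadSet_card {n : ℕ} {t : Fin n × Fin n × Fin n × Fin n} (ht : quadOK t) :
    (quadSet t).card = 4 := by
  obtain ⟨h1, h2, h3⟩ := ht
  have h12 := h1.ne
  have h13 := (h1.trans h2).ne
  have h14 := ((h1.trans h2).trans h3).ne
  have h23 := h2.ne
  have h24 := (h2.trans h3).ne
  have h34 := h3.ne
  simp only [quadSet]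
  rw [Finset.card_insert_of_notMem (by simp [h12, h13, h14]),
    Finset.card_insert_of_notMem (by simp [h23, h24]),
    Finset.card_insert_of_notMem (by simp [h34]), Finset.card_singleton]

lemma quadVec_eq_orderEmb {n : ℕ} {t : Fin n × Fin n × Fin n × Fin n} (ht : quadOK t) :
    quadVec t = (quadSet t).orderEmbOfFin (quadSet_card ht) :=
  Finset.orderEmbOfFin_unique (quadSet_card ht) (quadVec_mem t) (quadVec_strictMono ht)

lemma quad_ext {n : ℕ} {t t' : Fin n × Fin n × Fin n × Fin n}
    (h : ∀ k, quadVec t k = quadVec t' k) : t = t' := by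
  have h0 := h 0; have h1 := h 1; have h2 := h 2; have h3 := h 3
  rw [quadVec0, quadVec0] at h0
  rw [quadVec1, quadVec1] at h1
  rw [quadVec2, quadVec2] at h2
  rw [quadVec3, quadVec3] at h3
  obtain ⟨a, b, c, d⟩ := t
  obtain ⟨a', b', c', d'⟩ := t'
  simp_all

lemma quadSet_eq_of_quadOK {n : ℕ} {t t' : Fin n × Fin n × Fin n × Fin n}
    (ht : quadOK t) (ht' : quadOK t') (h : quadSet t = quadSet t') : t = t' := by
  apply quad_ext
  intro k
  rw [quadVec_eq_orderEmb ht, quadVec_eq_orderEmb ht']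
  congr 1 <;> simp [h]

lemma IDist_rig {n : ℕ} {M : Matrix (Fin 2) (Fin 2) ℝ}
    (hM : M ∈ Matrix.orthogonalGroup (Fin 2) ℝ) (T : EuclideanSpace ℝ (Fin 2))
    (p q : Fin n → EuclideanSpace ℝ (Fin 2)) (ρ : Equiv.Perm (Fin n))
    (hpq : ∀ j, q j = rig M T (p (ρ j))) :
    IDistribution q = (IDistribution p).map (fun x => M.det ^ 9 * x) := by
  classical
  set S := ((Finset.univ : Finset (Fin n × Fin n × Fin n × Fin n)).filter
      fun t => t.1 < t.2.1 ∧ t.2.1 < t.2.2.1 ∧ t.2.2.1 < t.2.2.2) with hS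
  have hmemS : ∀ t, t ∈ S ↔ quadOK t := by
    intro t; simp [hS, Finset.mem_filter, quadOK]
  have hmemS' : ∀ t : Fin n × Fin n × Fin n × Fin n, t ∈ S.val ↔ quadOK t := hmemS
  -- the sorting map
  have card_im : ∀ t : Fin n × Fin n × Fin n × Fin n, quadOK t →
      ((quadSet t).image ρ).card = 4 := by
    intro t ht
    rw [Finset.card_image_of_injective _ ρ.injective, quadSet_card ht]
  set Φ : (Fin n × Fin n × Fin n × Fin n) → (Fin n × Fin n × Fin n × Fin n) :=
    fun t => if h : ((quadSet t).image ρ).card = 4 then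
      (((quadSet t).image ρ).orderEmbOfFin h 0, ((quadSet t).image ρ).orderEmbOfFin h 1,
       ((quadSet t).image ρ).orderEmbOfFin h 2, ((quadSet t).image ρ).orderEmbOfFin h 3)
      else t with hΦ
  have hΦvec : ∀ t (h : ((quadSet t).image ρ).card = 4) (k : Fin 4),
      quadVec (Φ t) k = ((quadSet t).image ρ).orderEmbOfFin h k := by
    intro t h k
    rw [hΦ]
    simp only [dif_pos h]
    fin_cases k <;> simp [quadVec]
  have hΦOK : ∀ t, quadOK t → quadOK (Φ t) := by
    intro t ht
    have h := card_im t ht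
    have hm := (((quadSet t).image ρ).orderEmbOfFin h).strictMono
    refine ⟨?_, ?_, ?_⟩
    · rw [← quadVec0 (Φ t), ← quadVec1 (Φ t), hΦvec t h 0, hΦvec t h 1]
      exact hm (by decide : (0 : Fin 4) < 1)
    · rw [← quadVec1 (Φ t), ← quadVec2 (Φ t), hΦvec t h 1, hΦvec t h 2]
      exact hm (by decide : (1 : Fin 4) < 2)
    · rw [← quadVec2 (Φ t), ← quadVec3 (Φ t), hΦvec t h 2, hΦvec t h 3]
      exact hm (by decide : (2 : Fin 4) < 3)
  have hΦset : ∀ t, quadOK t → quadSet (Φ t) = (quadSet t).image ρ := by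
    intro t ht
    have h := card_im t ht
    have hOK := hΦOK t ht
    apply Finset.eq_of_subset_of_card_le
    · intro x hx
      simp only [quadSet, Finset.mem_insert, Finset.mem_singleton] at hx
      have hk : ∃ k : Fin 4, quadVec (Φ t) k = x := by
        rcases hx with rfl | rfl | rfl | rfl
        exacts [⟨0, quadVec0 _⟩, ⟨1, quadVec1 _⟩, ⟨2, quadVec2 _⟩, ⟨3, quadVec3 _⟩]
      obtain ⟨k, rfl⟩ := hk
      rw [hΦvec t h k]
      exact Finset.orderEmbOfFin_mem _ h k
    · rw [h, quadSet_card hOK]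
  have hΦinj : ∀ t ∈ S.val, ∀ t' ∈ S.val, Φ t = Φ t' → t = t' := by
    intro t ht t' ht' he
    rw [hmemS'] at ht ht'
    have h1 : (quadSet t).image ρ = (quadSet t').image ρ := by
      rw [← hΦset t ht, ← hΦset t' ht', he]
    have h2 : quadSet t = quadSet t' :=
      Finset.image_injective ρ.injective h1
    exact quadSet_eq_of_quadOK ht ht' h2
  have hΦmapval : S.val.map Φ = S.val := by
    apply Multiset.eq_of_le_of_card_le
    · rw [Multiset.le_iff_subset (S.nodup.map_on hΦinj)]
      intro z hz
      obtain ⟨w, hw, rfl⟩ := Multiset.mem_map.mp hz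
      rw [hmemS'] at hw ⊢
      exact hΦOK w hw
    · simp
  -- pointwise identity
  have hpoint : ∀ t ∈ S.val,
      Ifun (q t.1) (q t.2.1) (q t.2.2.1) (q t.2.2.2) =
      M.det ^ 9 * Ifun (p (Φ t).1) (p (Φ t).2.1) (p (Φ t).2.2.1) (p (Φ t).2.2.2) := by
    intro t ht
    rw [hmemS'] at ht
    have h := card_im t ht
    set e : Fin 4 → Fin n := ⇑(((quadSet t).image ρ).orderEmbOfFin h) with he
    set u : Fin 4 → Fin n := fun k => ρ (quadVec t k) with hu
    have huinj : Function.Injective u :=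
      ρ.injective.comp (quadVec_strictMono ht).injective
    have humem : ∀ k, u k ∈ (quadSet t).image ρ := by
      intro k
      exact Finset.mem_image_of_mem ρ (quadVec_mem t k)
    have hex : ∀ k : Fin 4, ∃ m : Fin 4, e m = u k := by
      intro k
      have : (u k : Fin n) ∈ ((quadSet t).image ρ) := humem k
      have : u k ∈ Set.range e := by
        rw [he, Finset.range_orderEmbOfFin]
        exact this
      obtain ⟨m, hm⟩ := this
      exact ⟨m, hm⟩
    choose g hg using hex
    have hginj : Function.Injective g := by
      intro a b hab
      apply huinj
      rw [← hg a, ← hg b, hab]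
    have hgbij : Function.Bijective g := Finite.injective_iff_bijective.mp hginj
    set σ : Equiv.Perm (Fin 4) := Equiv.ofBijective g hgbij with hσ
    have hσap : ∀ k, e (σ k) = u k := by
      intro k
      rw [hσ]
      exact hg k
    -- rewrite q's in terms of p ∘ u
    have hq1 : q t.1 = rig M T (p (u 0)) := by rw [hpq]; simp [hu, quadVec]
    have hq2 : q t.2.1 = rig M T (p (u 1)) := by rw [hpq]; simp [hu, quadVec]
    have hq3 : q t.2.2.1 = rig M T (p (u 2)) := by rw [hpq]; simp [hu, quadVec]
    have hq4 : q t.2.2.2 = rig M T (p (u 3)) := by rw [hpq]; simp [hu, quadVec]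
    rw [hq1, hq2, hq3, hq4, Ifun_rig]
    congr 1
    have hperm := Ifun_perm σ (fun k => p (e k))
    simp only [hσap] at hperm
    rw [hperm]
    have hv : ∀ k, quadVec (Φ t) k = e k := hΦvec t h
    rw [← quadVec0 (Φ t), ← quadVec1 (Φ t), ← quadVec2 (Φ t), ← quadVec3 (Φ t),
      hv 0, hv 1, hv 2, hv 3]
  unfold IDistribution
  rw [show ((Finset.univ : Finset (Fin n × Fin n × Fin n × Fin n)).filter
      fun t => t.1 < t.2.1 ∧ t.2.1 < t.2.2.1 ∧ t.2.2.1 < t.2.2.2) = S from rfl]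
  have e1 : S.val.map (fun t => Ifun (q t.1) (q t.2.1) (q t.2.2.1) (q t.2.2.2)) =
      S.val.map ((fun t => M.det ^ 9 * Ifun (p t.1) (p t.2.1) (p t.2.2.1) (p t.2.2.2)) ∘ Φ) :=
    Multiset.map_congr rfl (fun x hx => hpoint x hx)
  have e2 : S.val.map ((fun t => M.det ^ 9 * Ifun (p t.1) (p t.2.1) (p t.2.2.1) (p t.2.2.2)) ∘ Φ)
      = (S.val.map Φ).map
        (fun t => M.det ^ 9 * Ifun (p t.1) (p t.2.1) (p t.2.2.1) (p t.2.2.2)) :=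
    (Multiset.map_map _ _ _).symm
  rw [e1, e2, hΦmapval, Multiset.map_map]
  rfl

theorem stmt_17 (n : ℕ) (hn : 4 ≤ n) (p : Fin n → EuclideanSpace ℝ (Fin 2))
    (hrec : ReconstructibleFromDistances p)
    (hasym : (IDistribution p).map (fun x => -x) ≠ IDistribution p)
    (q : Fin n → EuclideanSpace ℝ (Fin 2)) :
    (sqDistDistribution q = sqDistDistribution p ∧ IDistribution q = IDistribution p) ↔
      ∃ R : Matrix (Fin 2) (Fin 2) ℝ, R ∈ Matrix.specialOrthogonalGroup (Fin 2) ℝ ∧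
        ∃ T : EuclideanSpace ℝ (Fin 2), ∃ π : Equiv.Perm (Fin n),
          ∀ i, (WithLp.equiv 2 (Fin 2 → ℝ)).symm (R.mulVec (p i)) + T = q (π i) := by
  constructor
  · rintro ⟨hsq, hI⟩
    obtain ⟨M, hM, T, π, hMTq⟩ := hrec q hsq
    have hpq : ∀ j, q j = rig M T (p (π.symm j)) := by
      intro j
      have := hMTq (π.symm j)
      simp only [Equiv.apply_symm_apply] at this
      rw [← this]; rfl
    have hd2 := det_sq_of_orth hM
    have hd : M.det = 1 ∨ M.det = -1 := by
      have : (M.det - 1) * (M.det + 1) = 0 := by ring_nf; linarith [hd2]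
      rcases mul_eq_zero.mp this with h | h
      · left; linarith
      · right; linarith
    rcases hd with hd | hd
    · refine ⟨M, ?_, T, π, hMTq⟩
      rw [Matrix.mem_specialOrthogonalGroup_iff]
      exact ⟨hM, hd⟩
    · exfalso
      have := IDist_rig hM T p q π.symm hpq
      rw [hI, hd] at this
      apply hasym
      conv_rhs => rw [this]
      apply Multiset.map_congr rfl
      intro x _
      ring
  · rintro ⟨R, hR, T, π, hRTq⟩
    obtain ⟨hRo, hRdet⟩ := (Matrix.mem_specialOrthogonalGroup_iff).mp hR
    have hpq : ∀ j, q j = rig R T (p (π.symm j)) := by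
      intro j
      have := hRTq (π.symm j)
      simp only [Equiv.apply_symm_apply] at this
      rw [← this]; rfl
    constructor
    · exact sqDist_rig hRo T p q π.symm hpq
    · have := IDist_rig hRo T p q π.symm hpq
      rw [this, hRdet]
      conv_rhs => rw [show IDistribution p = (IDistribution p).map id from
        (Multiset.map_id _).symm]
      apply Multiset.map_congr rfl
      intro x _
      simp
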